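/- Fix q with 0 < q ≤ 1 and let H = ℓ²(ℕ, ℂ). A bounded linear operator A on H belongs to the saturated unitary orbit SU(C_q) if and only if there exist vectors x, y ∈ H with ‖x‖ = ‖y‖ = 1 and |⟨x, y⟩| = q such that A = x ⊗ y*. (Equivalently: A is a rank-one operator with Hilbert–Schmidt norm 1 whose trace has modulus q, since for A = x ⊗ y* one has tr A = ⟨x, y⟩ and ‖A‖₂ = ‖x‖·‖y‖.) -/

import Mathlib

open scoped ComplexConjugate

noncomputable section

/-- `H = ℓ²(ℕ, ℂ)`. -/
abbrev H : Type := lp (fun _ : ℕ => ℂ) 2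

/-- Entrywise complex conjugation on `ℓ²(ℕ, ℂ)`: `(J x) n = conj (x n)`. -/
def J : H → H := fun x => star x

theorem J_apply (x : H) (n : ℕ) : (J x) n = conj (x n) := rfl

/-- The complex-linear bounded operator `J ∘ A ∘ J`. -/
def conjOp (A : H →L[ℂ] H) : H →L[ℂ] H :=
  LinearMap.mkContinuous
    { toFun := fun x => J (A (J x))
      map_add' := by intro x y; simp [J, star_add]
      map_smul' := by intro c x; simp [J, star_smul] }
    ‖A‖
    (by
      intro x
      simp only [LinearMap.coe_mk, AddHom.coe_mk, J, norm_star]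
      calc ‖A (star x)‖ ≤ ‖A‖ * ‖star x‖ := A.le_opNorm _
        _ = ‖A‖ * ‖x‖ := by rw [norm_star])

theorem conjOp_apply (A : H →L[ℂ] H) (x : H) : conjOp A x = J (A (J x)) := rfl

/-- The `q`-numerical radius.  The paper's inner product `⟨·,·⟩` is linear in the
first argument, while Mathlib's `inner x y` is linear in `y`; hence the paper's
`⟨x, y⟩` is `inner y x` below. -/
def rq (q : ℝ) (A : H →L[ℂ] H) : ℝ :=
  sSup { r : ℝ | ∃ x y : H, ‖x‖ = 1 ∧ ‖y‖ = 1 ∧ (inner ℂ y x : ℂ) = (q : ℂ) ∧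
    r = ‖(inner ℂ y (A x) : ℂ)‖ }

/-- The standard orthonormal basis of `ℓ²(ℕ, ℂ)`. -/
def e (n : ℕ) : H := lp.single 2 n (1 : ℂ)

/-- The rank-one operator `x ⊗ y* : v ↦ ⟨v, y⟩ • x` (paper convention, so in
Mathlib notation `v ↦ (inner y v) • x`). -/
def rankOneOp (x y : H) : H →L[ℂ] H := (innerSL ℂ y).smulRight x

theorem rankOneOp_apply (x y v : H) : rankOneOp x y v = (inner ℂ y v : ℂ) • x := rfl

/-- The operator `C_q : x ↦ (q·⟨x, e₀⟩ + √(1 − q²)·⟨x, e₁⟩) • e₀`. -/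
def Cq (q : ℝ) : H →L[ℂ] H :=
  rankOneOp (e 0) ((q : ℂ) • e 0 + (Real.sqrt (1 - q ^ 2) : ℂ) • e 1)

/-- The saturated unitary orbit `SU(C_q) = {λ · U* C_q U : |λ| = 1, U unitary}`. -/
def SUorbit (q : ℝ) : Set (H →L[ℂ] H) :=
  { T | ∃ (lam : ℂ) (U : H →L[ℂ] H), ‖lam‖ = 1 ∧ U ∈ unitary (H →L[ℂ] H) ∧
      T = lam • (star U ∘L Cq q ∘L U) }

/-- The Hilbert–Schmidt norm `‖T‖₂ = (∑ₙ ‖T eₙ‖²)^{1/2}`. -/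
def hsNorm (T : H →L[ℂ] H) : ℝ := Real.sqrt (∑' n : ℕ, ‖T (e n)‖ ^ 2)

section AuxLemmas

local notation "⟪" x ", " y "⟫" => @inner ℂ H _ x y

lemma norm_e (n : ℕ) : ‖e n‖ = 1 := by
  have := lp.norm_single (p := 2) (E := fun _ : ℕ => ℂ) (by norm_num) n (1 : ℂ)
  simpa [e] using this

lemma inner_e (m n : ℕ) : ⟪e m, e n⟫ = if m = n then (1 : ℂ) else 0 := by
  rw [e, e, lp.inner_single_left, RCLike.inner_apply, map_one, mul_one, lp.single_apply]
  split_ifs with h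
  · subst h; exact Pi.single_eq_same _ _
  · exact Pi.single_eq_of_ne h _

lemma inner_self_H (x : H) : ⟪x, x⟫ = ((‖x‖ ^ 2 : ℝ) : ℂ) := by
  exact_mod_cast inner_self_eq_norm_sq_to_K (𝕜 := ℂ) x

lemma norm_eq_of_inner_self {x : H} {r : ℝ} (hr : 0 ≤ r) (h : ⟪x, x⟫ = (r : ℂ) ^ 2) :
    ‖x‖ = r := by
  have h2 : ((‖x‖ ^ 2 : ℝ) : ℂ) = ((r ^ 2 : ℝ) : ℂ) := by
    rw [← inner_self_H, h]; push_cast; ring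
  have h3 : ‖x‖ ^ 2 = r ^ 2 := by exact_mod_cast h2
  rw [← Real.sqrt_sq (norm_nonneg x), h3, Real.sqrt_sq hr]

lemma norm_one_of_inner_self {x : H} (h : ⟪x, x⟫ = 1) : ‖x‖ = 1 :=
  norm_eq_of_inner_self zero_le_one (by rw [h]; norm_num)

lemma inner_self_of_norm_one {x : H} (h : ‖x‖ = 1) : ⟪x, x⟫ = 1 := by
  rw [inner_self_H, h]; norm_num

lemma star_rankOneOp (x y : H) : star (rankOneOp x y) = rankOneOp y x := by
  rw [ContinuousLinearMap.star_eq_adjoint]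
  symm
  rw [ContinuousLinearMap.eq_adjoint_iff]
  intro u v
  simp [rankOneOp_apply, inner_smul_left, inner_smul_right, inner_conj_symm, mul_comm]

lemma rankOneOp_comp (x y a b : H) :
    rankOneOp x y ∘L rankOneOp a b = ⟪y, a⟫ • rankOneOp x b := by
  refine ContinuousLinearMap.ext fun v => ?_
  simp [rankOneOp_apply, inner_smul_right, smul_smul, mul_comm]

lemma rankOneOp_smul_left (c : ℂ) (x y : H) :
    rankOneOp (c • x) y = c • rankOneOp x y := by
  refine ContinuousLinearMap.ext fun v => ?_
  simp [rankOneOp_apply, smul_smul, mul_comm]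

lemma rankOneOp_smul_right (c : ℂ) (x y : H) :
    rankOneOp x (c • y) = conj c • rankOneOp x y := by
  refine ContinuousLinearMap.ext fun v => ?_
  simp [rankOneOp_apply, inner_smul_left, smul_smul, mul_comm]

lemma one_add_smul_mul (v : H) (a b : ℂ) :
    (1 + a • rankOneOp v v) * (1 + b • rankOneOp v v)
      = 1 + (a + b + a * b * ⟪v, v⟫) • rankOneOp v v := by
  refine ContinuousLinearMap.ext fun u => ?_
  simp only [ContinuousLinearMap.mul_apply, ContinuousLinearMap.add_apply,
    ContinuousLinearMap.smul_apply, ContinuousLinearMap.one_apply,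
    rankOneOp_apply, inner_add_right, inner_smul_right]
  module

lemma elem_unitary (v : H) (c : ℂ) (h : c + conj c + c * conj c * ⟪v, v⟫ = 0) :
    (1 + c • rankOneOp v v) ∈ unitary (H →L[ℂ] H) := by
  have hstar : star (1 + c • rankOneOp v v) = 1 + conj c • rankOneOp v v := by
    rw [star_add, star_one, star_smul, star_rankOneOp]
    rfl
  rw [Unitary.mem_iff, hstar, one_add_smul_mul, one_add_smul_mul]
  constructor
  · rw [show conj c + c + conj c * c * ⟪v, v⟫ = 0 by linear_combination h]
    simp
  · rw [show c + conj c + c * conj c * ⟪v, v⟫ = 0 from h]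
    simp

lemma unitary_star_apply {U : H →L[ℂ] H} (hU : U ∈ unitary (H →L[ℂ] H)) (x : H) :
    star U (U x) = x := by
  have h : star U * U = 1 := (Unitary.mem_iff.mp hU).1
  calc star U (U x) = (star U * U) x := rfl
    _ = x := by rw [h]; rfl

lemma unitary_apply_star {U : H →L[ℂ] H} (hU : U ∈ unitary (H →L[ℂ] H)) (x : H) :
    U (star U x) = x := by
  have h : U * star U = 1 := (Unitary.mem_iff.mp hU).2
  calc U (star U x) = (U * star U) x := rfl
    _ = x := by rw [h]; rfl

lemma unitary_inner {U : H →L[ℂ] H} (hU : U ∈ unitary (H →L[ℂ] H)) (x y : H) :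
    ⟪U x, U y⟫ = ⟪x, y⟫ := by
  have h := ContinuousLinearMap.adjoint_inner_right U x (U y)
  rw [← ContinuousLinearMap.star_eq_adjoint, unitary_star_apply hU y] at h
  exact h.symm

lemma unitary_norm {U : H →L[ℂ] H} (hU : U ∈ unitary (H →L[ℂ] H)) (x : H) :
    ‖U x‖ = ‖x‖ := by
  refine norm_eq_of_inner_self (norm_nonneg x) ?_
  rw [unitary_inner hU, inner_self_H]
  push_cast
  ring

lemma conj_rankOneOp {U : H →L[ℂ] H} (hU : U ∈ unitary (H →L[ℂ] H)) (x y : H) :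
    star U ∘L rankOneOp x y ∘L U = rankOneOp (star U x) (star U y) := by
  refine ContinuousLinearMap.ext fun v => ?_
  simp only [ContinuousLinearMap.comp_apply, rankOneOp_apply, map_smul]
  congr 1
  rw [ContinuousLinearMap.star_eq_adjoint, ContinuousLinearMap.adjoint_inner_left]

lemma exists_unitary_strong {a b : H} (ha : ‖a‖ = 1) (hb : ‖b‖ = 1) :
    ∃ U ∈ unitary (H →L[ℂ] H), U a = b ∧
      ∀ x : H, ⟪a, x⟫ = 0 → ⟪b, x⟫ = 0 → U x = x := by
  have haa : ⟪a, a⟫ = 1 := inner_self_of_norm_one ha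
  have hbb : ⟪b, b⟫ = 1 := inner_self_of_norm_one hb
  set c : ℂ := ⟪a, b⟫ with hc
  set μ : ℂ := if c = 0 then 1 else c / ‖c‖ with hμ
  have hμ1 : ‖μ‖ = 1 := by
    by_cases h : c = 0
    · simp [hμ, h]
    · have hn : ‖c‖ ≠ 0 := norm_ne_zero_iff.mpr h
      rw [hμ, if_neg h, norm_div, Complex.norm_real, Real.norm_eq_abs,
        abs_of_nonneg (norm_nonneg c), div_self hn]
  have hm : μ * conj μ = 1 := by
    rw [Complex.mul_conj', hμ1]; norm_num
  have hμc : conj μ * c = (‖c‖ : ℂ) := by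
    by_cases h : c = 0
    · simp [hμ, h]
    · have hne : ((‖c‖ : ℝ) : ℂ) ≠ 0 := by exact_mod_cast norm_ne_zero_iff.mpr h
      rw [hμ, if_neg h, map_div₀, Complex.conj_ofReal, div_mul_eq_mul_div,
        Complex.conj_mul', sq, mul_div_assoc, div_self hne, mul_one]
  have h1 : ⟪b, a⟫ = conj c := (inner_conj_symm b a).symm
  have h2 : μ * conj c = (‖c‖ : ℂ) := by
    have h3 := congrArg conj hμc
    simpa [map_mul, Complex.conj_conj, Complex.conj_ofReal, mul_comm] using h3
  set D : H →L[ℂ] H := 1 + (μ - 1) • rankOneOp a a with hD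
  have hDu : D ∈ unitary (H →L[ℂ] H) := by
    apply elem_unitary
    rw [haa, map_sub, map_one]
    linear_combination hm
  have hDa : D a = μ • a := by
    simp only [hD, ContinuousLinearMap.add_apply, ContinuousLinearMap.smul_apply,
      ContinuousLinearMap.one_apply, rankOneOp_apply, haa, one_smul]
    module
  have hDfix : ∀ x : H, ⟪a, x⟫ = 0 → D x = x := by
    intro x hx
    simp [hD, rankOneOp_apply, hx]
  by_cases hv : μ • a - b = 0
  · refine ⟨D, hDu, ?_, fun x hx _ => hDfix x hx⟩
    rw [hDa, ← sub_eq_zero]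
    exact hv
  · set v : H := μ • a - b with hvdef
    have htne : ⟪v, v⟫ ≠ 0 := fun h => hv (inner_self_eq_zero.mp h)
    set t : ℂ := ⟪v, v⟫ with ht
    have htr : conj t = t := by rw [ht]; exact inner_conj_symm v v
    have hva : ⟪v, μ • a⟫ = 1 - (‖c‖ : ℂ) := by
      rw [hvdef]
      simp only [inner_sub_left, inner_smul_left, inner_smul_right, haa, h1]
      linear_combination hm - h2
    have hvb : ⟪v, b⟫ = (‖c‖ : ℂ) - 1 := by
      rw [hvdef]
      simp only [inner_sub_left, inner_smul_left, hbb, ← hc]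
      linear_combination hμc
    have hkey : ⟪v, μ • a⟫ = t / 2 := by
      have : t = ⟪v, μ • a⟫ - ⟪v, b⟫ := by
        rw [ht]
        nth_rewrite 2 [hvdef]
        rw [inner_sub_right]
      rw [hva, hvb] at this
      rw [hva, this]
      ring
    set R : H →L[ℂ] H := 1 + (-(2 / t)) • rankOneOp v v with hR
    have hRu : R ∈ unitary (H →L[ℂ] H) := by
      apply elem_unitary
      rw [← ht]
      simp only [map_neg, map_div₀, map_ofNat, htr]
      field_simp
      ring
    have hRa : R (μ • a) = b := by
      have hcoef : (-(2 / t)) * ⟪v, μ • a⟫ = -1 := by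
        rw [hkey]
        field_simp
      calc R (μ • a) = μ • a + ((-(2 / t)) * ⟪v, μ • a⟫) • v := by
            simp only [hR, ContinuousLinearMap.add_apply, ContinuousLinearMap.smul_apply,
              ContinuousLinearMap.one_apply, rankOneOp_apply, smul_smul]
        _ = μ • a + (-1 : ℂ) • v := by rw [hcoef]
        _ = b := by rw [neg_one_smul, ← sub_eq_add_neg, hvdef, sub_sub_cancel]
    have hRfix : ∀ x : H, ⟪a, x⟫ = 0 → ⟪b, x⟫ = 0 → R x = x := by
      intro x hx hbx
      have hvx : ⟪v, x⟫ = 0 := by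
        rw [hvdef, inner_sub_left, inner_smul_left, hx, hbx]
        ring
      simp [hR, rankOneOp_apply, hvx]
    refine ⟨R * D, mul_mem hRu hDu, ?_, ?_⟩
    · rw [ContinuousLinearMap.mul_apply, hDa, hRa]
    · intro x hx hbx
      rw [ContinuousLinearMap.mul_apply, hDfix x hx, hRfix x hx hbx]

lemma exists_unitary_pair {a a' b b' : H} (ha : ‖a‖ = 1) (ha' : ‖a'‖ = 1)
    (hb : ‖b‖ = 1) (hb' : ‖b'‖ = 1) (hao : ⟪a, a'⟫ = 0) (hbo : ⟪b, b'⟫ = 0) :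
    ∃ U ∈ unitary (H →L[ℂ] H), U a = b ∧ U a' = b' := by
  obtain ⟨U₁, hU₁, hU₁a, -⟩ := exists_unitary_strong ha hb
  have hv : ‖U₁ a'‖ = 1 := by rw [unitary_norm hU₁, ha']
  have hbv : ⟪b, U₁ a'⟫ = 0 := by rw [← hU₁a, unitary_inner hU₁, hao]
  obtain ⟨U₂, hU₂, hU₂v, hU₂fix⟩ := exists_unitary_strong hv hb'
  have h1 : ⟪U₁ a', b⟫ = 0 := by rw [← inner_conj_symm, hbv, map_zero]
  have h2 : ⟪b', b⟫ = 0 := by rw [← inner_conj_symm, hbo, map_zero]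
  have hU₂b : U₂ b = b := hU₂fix b h1 h2
  exact ⟨U₂ * U₁, mul_mem hU₂ hU₁,
    by rw [ContinuousLinearMap.mul_apply, hU₁a, hU₂b],
    by rw [ContinuousLinearMap.mul_apply, hU₂v]⟩

end AuxLemmas

section Main

local notation "⟪" x ", " y "⟫" => @inner ℂ H _ x y

/-- A bounded operator on `ℓ²(ℕ, ℂ)` belongs to the saturated unitary orbit
`SU(C_q)` iff it equals `x ⊗ y*` for unit vectors `x, y` with `|⟨x, y⟩| = q`. -/
theorem statement5 (q : ℝ) (hq0 : 0 < q) (hq1 : q ≤ 1) (A : H →L[ℂ] H) :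
    A ∈ SUorbit q ↔
      ∃ x y : H, ‖x‖ = 1 ∧ ‖y‖ = 1 ∧ ‖(inner ℂ y x : ℂ)‖ = q ∧ A = rankOneOp x y := by
  have hq2 : (0:ℝ) ≤ 1 - q ^ 2 := by nlinarith
  set β : ℝ := Real.sqrt (1 - q ^ 2) with hβ
  have hβ2 : β ^ 2 = 1 - q ^ 2 := Real.sq_sqrt hq2
  set w : H := (q : ℂ) • e 0 + (β : ℂ) • e 1 with hw
  have hCq : Cq q = rankOneOp (e 0) w := rfl
  have hwe0 : ⟪w, e 0⟫ = (q : ℂ) := by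
    rw [hw, inner_add_left, inner_smul_left, inner_smul_left, inner_e, inner_e]
    simp [Complex.conj_ofReal]
  have hww : ⟪w, w⟫ = 1 := by
    have hr : q * q + β * β = 1 := by nlinarith
    have hrc : ((q : ℝ) : ℂ) * q + ((β : ℝ) : ℂ) * β = 1 := by exact_mod_cast hr
    rw [hw]
    simp only [inner_add_left, inner_add_right, inner_smul_left, inner_smul_right,
      inner_e, Complex.conj_ofReal]
    norm_num
    linear_combination hrc
  have hwnorm : ‖w‖ = 1 := norm_one_of_inner_self hww
  constructor
  · rintro ⟨lam, U, hlam, hU, rfl⟩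
    have hsU := Unitary.star_mem hU
    refine ⟨lam • (star U) (e 0), (star U) w, ?_, ?_, ?_, ?_⟩
    · rw [norm_smul, hlam, unitary_norm hsU, norm_e, mul_one]
    · rw [unitary_norm hsU, hwnorm]
    · rw [inner_smul_right, unitary_inner hsU, hwe0, norm_mul, hlam, one_mul,
        Complex.norm_real, Real.norm_eq_abs, abs_of_pos hq0]
    · rw [hCq, conj_rankOneOp hU, rankOneOp_smul_left]
  · rintro ⟨x, y, hx, hy, hq', rfl⟩
    have hxx := inner_self_of_norm_one hx
    have hyy := inner_self_of_norm_one hy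
    set c : ℂ := ⟪x, y⟫ with hc
    have hyx : ⟪y, x⟫ = conj c := (inner_conj_symm y x).symm
    have hcq : ‖c‖ = q := by
      rw [← hq', hyx, RCLike.norm_conj]
    have hcne : c ≠ 0 := by
      intro h
      rw [h, norm_zero] at hcq
      exact absurd hcq.symm (ne_of_gt hq0)
    set z : H := y - c • x with hz
    have hxz : ⟪x, z⟫ = 0 := by
      rw [hz, inner_sub_right, inner_smul_right, hxx, ← hc, mul_one, sub_self]
    have hzz : ⟪z, z⟫ = ((1 - q ^ 2 : ℝ) : ℂ) := by
      have hcc : conj c * c = ((q : ℝ) : ℂ) ^ 2 := by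
        rw [Complex.conj_mul', hcq]
      rw [hz]
      simp only [inner_sub_left, inner_sub_right, inner_smul_left, inner_smul_right,
        hxx, hyy, ← hc, hyx]
      push_cast
      linear_combination -hcc
    rcases eq_or_lt_of_le hq1 with hq1' | hqlt
    · -- q = 1
      have hβ0 : β = 0 := by rw [hβ, hq1']; norm_num
      have hw0 : w = e 0 := by
        rw [hw, hβ0, hq1']
        push_cast
        simp
      have hz0 : z = 0 := by
        have h0 : ⟪z, z⟫ = 0 := by rw [hzz, hq1']; norm_num
        exact inner_self_eq_zero.mp h0
      have hyx' : y = c • x := by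
        have h0 : y - c • x = 0 := by rw [← hz]; exact hz0
        exact sub_eq_zero.mp h0
      obtain ⟨U, hU, hUa, -⟩ := exists_unitary_strong hx (norm_e 0)
      refine ⟨conj c, U, by rw [RCLike.norm_conj, hcq, hq1'], hU, ?_⟩
      have hsU0 : star U (e 0) = x := by rw [← hUa, unitary_star_apply hU]
      rw [hCq, hw0, conj_rankOneOp hU, hsU0, hyx', rankOneOp_smul_right]
    · -- q < 1
      have h1q : (0:ℝ) < 1 - q ^ 2 := by nlinarith
      have hβpos : 0 < β := Real.sqrt_pos.mpr h1q
      have hβc : (β : ℂ) ≠ 0 := by exact_mod_cast hβpos.ne'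
      set u : H := ((β : ℂ))⁻¹ • z with hu
      have hzu : z = (β : ℂ) • u := by
        rw [hu, smul_inv_smul₀ hβc]
      have huu : ⟪u, u⟫ = 1 := by
        rw [hu, inner_smul_left, inner_smul_right, hzz, map_inv₀, Complex.conj_ofReal]
        have hcast : ((1 - q ^ 2 : ℝ) : ℂ) = (β : ℂ) ^ 2 := by exact_mod_cast hβ2.symm
        rw [hcast]
        field_simp
      have hun : ‖u‖ = 1 := norm_one_of_inner_self huu
      have hxu : ⟪x, u⟫ = 0 := by
        rw [hu, inner_smul_right, hxz, mul_zero]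
      set lam : ℂ := (q : ℂ) / c with hlam
      have hlam1 : ‖lam‖ = 1 := by
        rw [hlam, norm_div, Complex.norm_real, Real.norm_eq_abs, abs_of_pos hq0, hcq,
          div_self (ne_of_gt hq0)]
      have hlamne : lam ≠ 0 := by
        intro h
        rw [h, norm_zero] at hlam1
        norm_num at hlam1
      have hle0 : ‖lam • e 0‖ = 1 := by rw [norm_smul, hlam1, norm_e, mul_one]
      have horth2 : ⟪lam • e 0, e 1⟫ = 0 := by
        rw [inner_smul_left, inner_e]
        norm_num
      obtain ⟨U, hU, hU1, hU2⟩ := exists_unitary_pair hx hun hle0 (norm_e 1) hxu horth2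
      refine ⟨lam, U, hlam1, hU, ?_⟩
      have hy' : y = c • x + (β : ℂ) • u := by
        rw [← hzu, hz]
        module
      have hclam : c * lam = (q : ℂ) := by
        rw [hlam]
        field_simp
      have hUy : U y = w := by
        rw [hy', map_add, map_smul, map_smul, hU1, hU2, hw, smul_smul, hclam]
      have hsUw : star U w = y := by rw [← hUy, unitary_star_apply hU]
      have hsU0 : star U (e 0) = lam⁻¹ • x := by
        have hstep : star U (lam • e 0) = x := by
          rw [← hU1, unitary_star_apply hU]
        rw [map_smul] at hstep
        rw [← hstep, inv_smul_smul₀ hlamne]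
      rw [hCq, conj_rankOneOp hU, hsU0, hsUw, rankOneOp_smul_left, smul_smul,
        mul_inv_cancel₀ hlamne, one_smul]

end Main

end
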